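/- Let a and b be two non-zero Turing degrees that are incomparable with respect to Turing reducibility. Then the problems w_a and w_b are Weihrauch incomparable: neither w_a ≤_W w_b nor w_b ≤_W w_a holds. -/

import Mathlib

/-- Baire space. -/
abbrev Baire := ℕ → ℕ

/-- A problem: a partial multivalued function on Baire space, given as the
solution-set map; the domain is the set of instances with nonempty solution set. -/
def Problem := Baire → Set Baire

/-- Domain of a problem. -/
def Dom (f : Problem) : Set Baire := {x | (f x).Nonempty}

/-- A standard computable pairing of two sequences (interleaving). -/
def pair (x y : Baire) : Baire := fun n => if n % 2 = 0 then x (n / 2) else y (n / 2)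

/-- Initial segment of length `m` of a sequence. -/
def initSeg (x : Baire) (m : ℕ) : List ℕ := (List.range m).map x

/-- `F` is (the restriction to `D` of) a partial computable function on Baire space:
there is a computable monotone oracle functional computing `F x` from prefixes of `x`,
correctly and consistently, for every `x ∈ D`. -/
def ComputableOn (F : Baire → Baire) (D : Set Baire) : Prop :=
  ∃ φ : List ℕ → ℕ → Option ℕ, Computable₂ φ ∧
    ∀ x ∈ D, ∀ n : ℕ,
      (∃ m, φ (initSeg x m) n = some (F x n)) ∧
      (∀ m v, φ (initSeg x m) n = some v → v = F x n)

/-- Weihrauch reducibility `f ≤_W g`, with the partial computable forward functional `k`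
defined on `Dom f` and the partial computable backward functional `h` defined on all
pairs `⟨x, y⟩` with `x ∈ Dom f` and `y` a `g`-solution of `k x`. -/
def WRed (f g : Problem) : Prop :=
  ∃ h k : Baire → Baire,
    ComputableOn k (Dom f) ∧
    ComputableOn h {p | ∃ x ∈ Dom f, ∃ y ∈ g (k x), p = pair x y} ∧
    ∀ x ∈ Dom f, k x ∈ Dom g ∧ ∀ y ∈ g (k x), h (pair x y) ∈ f x

/-- Weihrauch equivalence. -/
def WEquiv (f g : Problem) : Prop := WRed f g ∧ WRed g f

/-- Continuous Weihrauch reducibility `f ≤*_W g`: as `WRed` but the functionals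
need only be partial continuous (continuous on their domains, Baire space carrying
the product topology). -/
def ContWRed (f g : Problem) : Prop :=
  ∃ h k : Baire → Baire,
    ContinuousOn k (Dom f) ∧
    ContinuousOn h {p | ∃ x ∈ Dom f, ∃ y ∈ g (k x), p = pair x y} ∧
    ∀ x ∈ Dom f, k x ∈ Dom g ∧ ∀ y ∈ g (k x), h (pair x y) ∈ f x

/-- Continuous Weihrauch equivalence. -/
def ContWEquiv (f g : Problem) : Prop := ContWRed f g ∧ ContWRed g f

/-- Composition of problems: `dom (f ∘ g) = {x ∈ dom g : g x ⊆ dom f}` and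
`(f ∘ g) x = {z : ∃ y ∈ g x, z ∈ f y}`. -/
def pcomp (f g : Problem) : Problem :=
  fun x => {z | g x ⊆ Dom f ∧ ∃ y ∈ g x, z ∈ f y}

/-- The identity problem. -/
def idp : Problem := fun x => {x}

/-- `p` is (a representative of) the compositional product `f * g`: the maximum,
with respect to `≤_W`, of `{f' ∘ g' : f' ≤_W f, g' ≤_W g}`. -/
def IsCompProd (f g p : Problem) : Prop :=
  (∃ f' g', WRed f' f ∧ WRed g' g ∧ WEquiv p (pcomp f' g')) ∧
  (∀ f' g', WRed f' f → WRed g' g → WRed (pcomp f' g') p)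

/-- `IsIter f n p` : `p` is (a representative of) `f^[n]`, the compositional product of
`n` copies of `f`, with `f^[0] := id`. -/
def IsIter (f : Problem) : ℕ → Problem → Prop
  | 0, p => p = idp
  | n + 1, p => ∃ q, IsIter f n q ∧ IsCompProd f q p

/-- The constant sequence with value `n`. -/
def cseq (n : ℕ) : Baire := fun _ => n

/-- The limited principle of omniscience. -/
def LPO : Problem := fun x =>
  {y | ((∃ n, x n = 0) ∧ y = cseq 0) ∨ ((∀ n, x n ≠ 0) ∧ y = cseq 1)}

/-- The lesser limited principle of omniscience. -/
def LLPO : Problem := fun x =>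
  {y | (∀ i j, x i ≠ 0 → x j ≠ 0 → i = j) ∧
       ((y = cseq 0 ∧ ∀ i, Even i → x i = 0) ∨
        (y = cseq 1 ∧ ∀ i, Odd i → x i = 0))}

/-- Turing reducibility between points of Baire space: `x` is computable from
oracle `y`. -/
def TuringLE (x y : Baire) : Prop :=
  ∃ φ : List ℕ → ℕ → Option ℕ, Computable₂ φ ∧
    ∀ n : ℕ, (∃ m, φ (initSeg y m) n = some (x n)) ∧
      (∀ m v, φ (initSeg y m) n = some v → v = x n)

/-- Mutual Turing reducibility: `x` and `y` have the same Turing degree. -/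
def TuringEquiv (x y : Baire) : Prop := TuringLE x y ∧ TuringLE y x

/-- Strict Turing reducibility. -/
def TuringLT (x y : Baire) : Prop := TuringLE x y ∧ ¬ TuringLE y x

/-- The problem `w_a`, for `a` a representative of a (non-zero) Turing degree. -/
def w (a : Baire) : Problem := fun x =>
  {y | (Computable x ∧ ¬ Computable y) ∨ (¬ Computable x ∧ TuringEquiv y a)}

/-- `k`-weak continuity of a problem. -/
def WeaklyContinuous (k : ℕ) (f : Problem) : Prop :=
  ∀ x ∈ Dom f, ∀ y : ℕ → Baire, (∀ n, y n ∈ Dom f) →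
    Filter.Tendsto y Filter.atTop (nhds x) →
    ∃ u ∈ f x, ∀ l < k, ∀ m : ℕ, ∃ n ≥ m,
      ∃ v ∈ f (y (n * k + l)), initSeg u m = initSeg v m

/-- Product of two problems. -/
def prodP (f g : Problem) : Problem := fun z =>
  {w | ∃ x y u v, z = pair x y ∧ w = pair u v ∧ u ∈ f x ∧ v ∈ g y}

/-- `powP f n` : the product of `n` copies of `f` (for `n ≥ 1`). -/
def powP (f : Problem) : ℕ → Problem
  | 0 => idp
  | 1 => f
  | n + 2 => prodP f (powP f (n + 1))

/-- A problem `f` is `k`-continuous: it has a realizer `r` (defined on a domain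
`D ⊇ Dom f`) together with a partition of `D` into at most `k` pieces (given by a
coloring `c`) such that `r` is continuous on each piece. -/
def kContinuous (k : ℕ) (f : Problem) : Prop :=
  ∃ (D : Set Baire) (r : Baire → Baire) (c : Baire → Fin k),
    Dom f ⊆ D ∧ (∀ x ∈ Dom f, r x ∈ f x) ∧
    ∀ i : Fin k, ContinuousOn r {x ∈ D | c x = i}


set_option maxHeartbeats 1000000

/-! ### Auxiliary machinery for Turing reducibility -/

lemma initSeg_length' (x : Baire) (m : ℕ) : (initSeg x m).length = m := by simp [initSeg]

lemma initSeg_get? (x : Baire) {n m : ℕ} (h : n < m) : (initSeg x m)[n]? = some (x n) := by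
  simp [initSeg, h]

lemma initSeg_get?_eq (x : Baire) {m n v : ℕ} (h : (initSeg x m)[n]? = some v) : v = x n := by
  simp [initSeg] at h
  obtain ⟨i, hi, hr⟩ := h
  rcases List.getElem?_eq_some_iff.mp hi with ⟨hlt, hval⟩
  simp at hval; subst hval; exact hr.symm

lemma initSeg_succ (x : Baire) (l : ℕ) : initSeg x (l+1) = initSeg x l ++ [x l] := by
  simp [initSeg, List.range_succ]

/-- `take` defined via `getD`, easily primitive recursive. -/
def mytake (σ : List ℕ) (m : ℕ) : List ℕ := (List.range m).map fun i => (σ[i]?).getD 0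

lemma mytake_initSeg (z : Baire) {M m : ℕ} (h : m ≤ M) : mytake (initSeg z M) m = initSeg z m := by
  unfold mytake initSeg
  apply List.map_congr_left
  intro i hi
  have : i < M := lt_of_lt_of_le (List.mem_range.mp hi) h
  simp [this]

def oor (o r : Option ℕ) : Option ℕ := match o with | some v => some v | none => r

def orec (f : ℕ → Option ℕ) : ℕ → Option ℕ := Nat.rec none (fun m ih => oor ih (f m))

lemma orec_some {f : ℕ → Option ℕ} : ∀ {c v}, orec f c = some v → ∃ m < c, f m = some v := by
  intro c
  induction c with
  | zero => intro v h; exact absurd h (by simp [orec])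
  | succ c ih =>
    intro v h
    have h' : oor (orec f c) (f c) = some v := h
    cases hc : orec f c with
    | some u =>
      rw [hc] at h'
      have huv : u = v := by simpa [oor] using h'
      subst huv
      obtain ⟨m, hm, he⟩ := ih hc
      exact ⟨m, hm.trans (Nat.lt_succ_self c), he⟩
    | none => rw [hc] at h'; exact ⟨c, Nat.lt_succ_self c, h'⟩

lemma orec_isSome {f : ℕ → Option ℕ} {m : ℕ} (hm : (f m).isSome) :
    ∀ {c}, m < c → (orec f c).isSome := by
  intro c
  induction c with
  | zero => omega
  | succ c ih =>
    intro h
    show (oor (orec f c) (f c)).isSome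
    cases hc : orec f c with
    | some u => simp [oor]
    | none =>
      simp only [oor]
      rcases Nat.lt_succ_iff_lt_or_eq.mp h with h' | h'
      · have := ih h'; rw [hc] at this; simp at this
      · subst h'; exact hm

def yval (ψ : List ℕ → ℕ → Option ℕ) (σ : List ℕ) (i : ℕ) : Option ℕ :=
  orec (fun m => ψ (mytake σ m) i) (σ.length + 1)

def tauaux (ψ : List ℕ → ℕ → Option ℕ) (σ : List ℕ) : ℕ → Option (List ℕ) :=
  Nat.rec (some []) (fun i ih => ih.bind fun t => (yval ψ σ i).map fun v => t ++ [v])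

def chi (φ ψ : List ℕ → ℕ → Option ℕ) (σ : List ℕ) (n : ℕ) : Option ℕ :=
  orec (fun l => (tauaux ψ σ l).bind fun t => φ t n) (σ.length + 1)

lemma mytake_primrec : Primrec₂ mytake :=
  Primrec.list_map (Primrec.list_range.comp Primrec.snd)
    ((Primrec.option_getD.comp
      (Primrec.list_getElem?.comp (Primrec.fst.comp Primrec.fst) Primrec.snd)
      (Primrec.const 0)).to₂)

lemma comp_oor {α} [Primcodable α] {o r : α → Option ℕ} (ho : Computable o)
    (hr : Computable r) : Computable fun a => oor (o a) (r a) :=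
  (Computable.option_casesOn ho hr
    ((Computable.option_some.comp Computable.snd).to₂)).of_eq fun a => by
      cases o a <;> rfl

lemma comp_orec {α} [Primcodable α] {F : α → ℕ → Option ℕ} {c : α → ℕ}
    (hF : Computable₂ F) (hc : Computable c) : Computable fun a => orec (F a) (c a) := by
  have h1 : Computable₂ fun (a : α) (q : ℕ × Option ℕ) => oor q.2 (F a q.1) :=
    (comp_oor (Computable.snd.comp Computable.snd)
      (hF.comp Computable.fst (Computable.fst.comp Computable.snd))).to₂
  have : Computable fun a => Nat.rec (motive := fun _ => Option ℕ) none
      (fun m ih => oor ih (F a m)) (c a) :=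
    Computable.nat_rec hc (Computable.const none) h1
  exact this.of_eq fun a => rfl

lemma comp_yval {ψ : List ℕ → ℕ → Option ℕ} (hψ : Computable₂ ψ) : Computable₂ (yval ψ) := by
  have h1 : Computable₂ fun (p : List ℕ × ℕ) (m : ℕ) => ψ (mytake p.1 m) p.2 :=
    (hψ.comp (mytake_primrec.to_comp.comp (Computable.fst.comp Computable.fst)
        Computable.snd) (Computable.snd.comp Computable.fst)).to₂
  have h2 : Computable fun p : List ℕ × ℕ => p.1.length + 1 :=
    Computable.succ.comp (Computable.list_length.comp Computable.fst)
  have : Computable fun p : List ℕ × ℕ =>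
      orec (fun m => ψ (mytake p.1 m) p.2) (p.1.length + 1) := comp_orec h1 h2
  exact this.of_eq fun p => rfl

lemma comp_tauaux {ψ : List ℕ → ℕ → Option ℕ} (hψ : Computable₂ ψ) :
    Computable₂ (tauaux ψ) := by
  have h0 : Computable₂ fun (q : ((List ℕ × ℕ) × ℕ × Option (List ℕ))) (t : List ℕ) =>
      (yval ψ q.1.1 q.2.1).map fun v => t ++ [v] := by
    have hy : Computable fun q : ((List ℕ × ℕ) × ℕ × Option (List ℕ)) × List ℕ =>
        yval ψ q.1.1.1 q.1.2.1 :=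
      (comp_yval hψ).comp (Computable.fst.comp (Computable.fst.comp Computable.fst))
        (Computable.fst.comp (Computable.snd.comp Computable.fst))
    exact (Computable.option_map hy
      ((Computable.list_concat.comp (Computable.snd.comp Computable.fst)
        Computable.snd).to₂)).to₂
  have h1 : Computable₂ fun (p : List ℕ × ℕ) (q : ℕ × Option (List ℕ)) =>
      q.2.bind fun t => (yval ψ p.1 q.1).map fun v => t ++ [v] :=
    (Computable.option_bind (Computable.snd.comp Computable.snd) h0).to₂
  have : Computable fun p : List ℕ × ℕ =>
      Nat.rec (motive := fun _ => Option (List ℕ)) (some [])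
        (fun i ih => ih.bind fun t => (yval ψ p.1 i).map fun v => t ++ [v]) p.2 :=
    Computable.nat_rec Computable.snd (Computable.const (some [])) h1
  exact this.of_eq fun p => rfl

lemma chi_computable {φ ψ : List ℕ → ℕ → Option ℕ} (hφ : Computable₂ φ)
    (hψ : Computable₂ ψ) : Computable₂ (chi φ ψ) := by
  have h0 : Computable₂ fun (q : (List ℕ × ℕ) × ℕ) (t : List ℕ) => φ t q.1.2 :=
    (hφ.comp Computable.snd (Computable.snd.comp (Computable.fst.comp Computable.fst))).to₂
  have h1 : Computable₂ fun (p : List ℕ × ℕ) (l : ℕ) =>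
      (tauaux ψ p.1 l).bind fun t => φ t p.2 :=
    (Computable.option_bind
      ((comp_tauaux hψ).comp (Computable.fst.comp Computable.fst) Computable.snd) h0).to₂
  have h2 : Computable fun p : List ℕ × ℕ => p.1.length + 1 :=
    Computable.succ.comp (Computable.list_length.comp Computable.fst)
  have : Computable fun p : List ℕ × ℕ =>
      orec (fun l => (tauaux ψ p.1 l).bind fun t => φ t p.2) (p.1.length + 1) :=
    comp_orec h1 h2
  exact this.of_eq fun p => rfl

theorem tle_refl (x : Baire) : TuringLE x x := by
  refine ⟨fun σ n => σ[n]?, ?_, fun n => ⟨⟨n + 1, initSeg_get? x (Nat.lt_succ_self n)⟩,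
    fun m v h => initSeg_get?_eq x h⟩⟩
  exact Computable.list_getElem?

theorem tle_trans {x y z : Baire} (h1 : TuringLE x y) (h2 : TuringLE y z) : TuringLE x z := by
  obtain ⟨φ, hφc, hφ⟩ := h1
  obtain ⟨ψ, hψc, hψ⟩ := h2
  refine ⟨chi φ ψ, chi_computable hφc hψc, fun n => ?_⟩
  have yvalC : ∀ M i v, yval ψ (initSeg z M) i = some v → v = y i := by
    intro M i v hv
    obtain ⟨m, hm, he⟩ := orec_some hv
    rw [initSeg_length'] at hm
    rw [mytake_initSeg z (Nat.lt_succ_iff.mp hm)] at he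
    exact (hψ i).2 m v he
  have tauC : ∀ M l t, tauaux ψ (initSeg z M) l = some t → t = initSeg y l := by
    intro M l
    induction l with
    | zero => intro t ht; simpa [tauaux, initSeg] using ht.symm
    | succ l ih =>
      intro t ht
      have ht' : (tauaux ψ (initSeg z M) l).bind
          (fun t => (yval ψ (initSeg z M) l).map fun v => t ++ [v]) = some t := ht
      rw [Option.bind_eq_some_iff] at ht'
      obtain ⟨t0, ht0, hmap⟩ := ht'
      rw [Option.map_eq_some_iff] at hmap
      obtain ⟨v, hvar, rfl⟩ := hmap
      rw [ih t0 ht0, yvalC M l v hvar, initSeg_succ]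
  have chiC : ∀ M v, chi φ ψ (initSeg z M) n = some v → v = x n := by
    intro M v hv
    obtain ⟨l, _, he⟩ := orec_some hv
    rw [Option.bind_eq_some_iff] at he
    obtain ⟨t, htl, hval⟩ := he
    rw [tauC M l t htl] at hval
    exact (hφ n).2 l v hval
  constructor
  · obtain ⟨m, hm⟩ := (hφ n).1
    have hex : ∀ i, ∃ k, ψ (initSeg z k) i = some (y i) := fun i => (hψ i).1
    set K := max m ((Finset.range m).sup fun i => Nat.find (hex i)) with hK
    set σ := initSeg z K with hσ
    have hlen : σ.length = K := initSeg_length' z K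
    have hyv : ∀ i < m, yval ψ σ i = some (y i) := by
      intro i hi
      have hk : Nat.find (hex i) ≤ K := by
        rw [hK]
        exact le_trans (Finset.le_sup (f := fun i => Nat.find (hex i)) (Finset.mem_range.mpr hi))
          (le_max_right _ _)
      have hsome : (yval ψ σ i).isSome := by
        apply orec_isSome (m := Nat.find (hex i))
        · rw [hσ, mytake_initSeg z hk, Nat.find_spec (hex i)]; rfl
        · rw [hlen]; omega
      obtain ⟨v, hv⟩ := Option.isSome_iff_exists.mp hsome
      rw [hv, yvalC K i v (hσ ▸ hv)]
    have tauF : ∀ (σ' : List ℕ) (l : ℕ), (∀ i < l, (yval ψ σ' i).isSome) →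
        (tauaux ψ σ' l).isSome := by
      intro σ' l
      induction l with
      | zero => intro _; simp [tauaux]
      | succ l ih =>
        intro hall
        have h1 : (tauaux ψ σ' l).isSome := ih (fun i hi => hall i (Nat.lt_succ_of_lt hi))
        obtain ⟨t, ht⟩ := Option.isSome_iff_exists.mp h1
        obtain ⟨v, hvv⟩ := Option.isSome_iff_exists.mp (hall l (Nat.lt_succ_self l))
        show ((tauaux ψ σ' l).bind fun t => (yval ψ σ' l).map fun v => t ++ [v]).isSome
        rw [ht, hvv]
        simp
    have htsome : (tauaux ψ σ m).isSome :=
      tauF σ m (fun i hi => by rw [hyv i hi]; rfl)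
    obtain ⟨t, ht⟩ := Option.isSome_iff_exists.mp htsome
    have htval : t = initSeg y m := tauC K m t (hσ ▸ ht)
    have hbind : ((tauaux ψ σ m).bind fun t => φ t n) = some (x n) := by
      rw [ht, htval]; exact hm
    have hcsome : (chi φ ψ σ n).isSome := by
      apply orec_isSome (m := m)
      · rw [hbind]; rfl
      · rw [hlen]; omega
    obtain ⟨v, hv⟩ := Option.isSome_iff_exists.mp hcsome
    exact ⟨K, by rw [hv, chiC K v hv]⟩
  · exact fun M v hv => chiC M v hv

lemma pair_self_eq (x : Baire) (n : ℕ) : pair x x n = x (n / 2) := by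
  unfold pair; split <;> rfl

theorem tle_pair_self (x : Baire) : TuringLE (pair x x) x := by
  refine ⟨fun σ n => σ[n / 2]?, ?_, fun n => ?_⟩
  · exact (Computable.list_getElem?.comp Computable.fst
      ((Primrec.nat_div.comp Primrec.snd (Primrec.const 2)).to_comp)).to₂
  · constructor
    · refine ⟨n / 2 + 1, ?_⟩
      show (initSeg x (n / 2 + 1))[n / 2]? = some (pair x x n)
      rw [initSeg_get? x (Nat.lt_succ_self _), pair_self_eq]
    · intro m v h
      rw [pair_self_eq]
      exact initSeg_get?_eq x h

theorem tle_of_computableOn {F : Baire → Baire} {D : Set Baire} (h : ComputableOn F D)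
    {p : Baire} (hp : p ∈ D) : TuringLE (F p) p := by
  obtain ⟨φ, hc, hH⟩ := h
  exact ⟨φ, hc, hH p hp⟩

theorem w_red_key {a b : Baire} (hb : ¬ Computable b) (hr : WRed (w a) (w b)) : TuringLE a b := by
  obtain ⟨h, k, hkc, hhc, hmain⟩ := hr
  have hbDom : b ∈ Dom (w a) := ⟨a, Or.inr ⟨hb, tle_refl a, tle_refl a⟩⟩
  obtain ⟨hkb, hsol⟩ := hmain b hbDom
  have hby : b ∈ w b (k b) := by
    by_cases hc : Computable (k b)
    · exact Or.inl ⟨hc, hb⟩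
    · exact Or.inr ⟨hc, tle_refl b, tle_refl b⟩
  have hyw : h (pair b b) ∈ w a b := hsol b hby
  have heq : TuringEquiv (h (pair b b)) a := by
    rcases hyw with ⟨hcb, _⟩ | ⟨_, he⟩
    · exact absurd hcb hb
    · exact he
  have t1 : TuringLE a (h (pair b b)) := heq.2
  have t2 : TuringLE (h (pair b b)) (pair b b) :=
    tle_of_computableOn hhc ⟨b, hbDom, b, hby, rfl⟩
  exact tle_trans (tle_trans t1 t2) (tle_pair_self b)

/-- If `a` and `b` represent incomparable non-zero Turing degrees, then `w_a` and `w_b`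
are Weihrauch incomparable. -/
theorem w_incomparable (a b : Baire) (ha : ¬ Computable a) (hb : ¬ Computable b)
    (hab : ¬ TuringLE a b) (hba : ¬ TuringLE b a) :
    ¬ WRed (w a) (w b) ∧ ¬ WRed (w b) (w a) := by
  exact ⟨fun hr => hab (w_red_key hb hr), fun hr => hba (w_red_key ha hr)⟩
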